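/- For any β ∈ ℂ and μ > 0, sup_{n ∈ ℕ} ∑_{m=0}^∞ e^{μ|√m − √n|} |⟨m|D(β)|n⟩|² < ∞. -/

import Mathlib

/-- Matrix elements ⟨m|D(β)|n⟩ of the Glauber displacement operator
D(β) = exp(β b† − β* b) = e^{−|β|²/2} e^{β b†} e^{−β* b} on ℓ²(ℕ), given by the
standard explicit expansion. -/
noncomputable def Dmat (β : ℂ) (m n : ℕ) : ℂ :=
  Complex.exp (-(((‖β‖ : ℝ) : ℂ) ^ 2) / 2) *
    ∑ k ∈ Finset.range (n + 1),
      if n - k ≤ m then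
        ((-(starRingEnd ℂ) β) ^ k / (Nat.factorial k : ℂ)) *
          (β ^ (m - (n - k)) / (Nat.factorial (m - (n - k)) : ℂ)) *
          ((Real.sqrt ((Nat.factorial n : ℝ) * (Nat.factorial m : ℝ)) /
            (Nat.factorial (n - k) : ℝ) : ℝ) : ℂ)
      else 0

open Finset


lemma real_exp_tsum (U : ℝ) : Real.exp U = ∑' n : ℕ, U ^ n / n.factorial := by
  rw [Real.exp_eq_exp_ℝ, NormedSpace.exp_eq_tsum ℝ]
  simp [div_eq_inv_mul, smul_eq_mul]

lemma L1a (i : ℕ) (U : ℝ) : Summable (fun s : ℕ => (s.choose i : ℝ) * U ^ s / s.factorial) := by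
  rw [← summable_nat_add_iff i]
  have : (fun s : ℕ => ((s + i).choose i : ℝ) * U ^ (s + i) / (s + i).factorial)
      = fun s : ℕ => (U ^ i / i.factorial) * (U ^ s / s.factorial) := by
    funext s
    have h : ((s + i).choose i : ℝ) = (s + i).factorial / (i.factorial * s.factorial) := by
      rw [Nat.cast_choose ℝ (Nat.le_add_left i s)]
      simp
    rw [h, pow_add]
    have h1 : ((s+i).factorial : ℝ) ≠ 0 := Nat.cast_ne_zero.2 (Nat.factorial_ne_zero _)
    field_simp
  rw [this]
  exact (Real.summable_pow_div_factorial U).mul_left _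

lemma L1b (i : ℕ) (U : ℝ) :
    ∑' s : ℕ, (s.choose i : ℝ) * U ^ s / s.factorial = U ^ i / i.factorial * Real.exp U := by
  rw [← Summable.sum_add_tsum_nat_add i (L1a i U)]
  have h0 : ∑ s ∈ range i, (s.choose i : ℝ) * U ^ s / s.factorial = 0 := by
    apply Finset.sum_eq_zero
    intro s hs
    rw [Nat.choose_eq_zero_of_lt (mem_range.1 hs)]
    simp
  have h1 : (fun s : ℕ => ((s + i).choose i : ℝ) * U ^ (s + i) / (s + i).factorial)
      = fun s : ℕ => (U ^ i / i.factorial) * (U ^ s / s.factorial) := by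
    funext s
    have h : ((s + i).choose i : ℝ) = (s + i).factorial / (i.factorial * s.factorial) := by
      rw [Nat.cast_choose ℝ (Nat.le_add_left i s)]
      simp
    rw [h, pow_add]
    have h1 : ((s+i).factorial : ℝ) ≠ 0 := Nat.cast_ne_zero.2 (Nat.factorial_ne_zero _)
    field_simp
  rw [h0, h1, tsum_mul_left, ← real_exp_tsum, zero_add]

lemma L2key (p d : ℕ) (U : ℝ) :
    (fun s : ℕ => ((s + p + d).factorial : ℝ) * U ^ s / ((s + d).factorial * s.factorial))
    = fun s : ℕ => ∑ ij ∈ antidiagonal p,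
        ((p.factorial : ℝ) * ((p + d).choose ij.2)) * ((s.choose ij.1 : ℝ) * U ^ s / s.factorial) := by
  funext s
  have hv : ((s + (p + d)).choose p : ℝ) = ∑ ij ∈ antidiagonal p,
      (s.choose ij.1 : ℝ) * ((p + d).choose ij.2) := by
    rw [Nat.add_choose_eq]; push_cast; ring_nf
  have hc : ((s + p + d).factorial : ℝ) / ((s + d).factorial * s.factorial)
      = ((s + (p+d)).choose p : ℝ) * p.factorial / s.factorial := by
    have h : ((s + (p+d)).choose p : ℝ)
        = ((s + (p+d)).factorial : ℝ) / (p.factorial * ((s + (p+d)) - p).factorial) := by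
      exact_mod_cast Nat.cast_choose ℝ (by omega)
    have he : s + (p + d) - p = s + d := by omega
    rw [h, he]
    have h1 : (p.factorial : ℝ) ≠ 0 := Nat.cast_ne_zero.2 (Nat.factorial_ne_zero _)
    have h2 : ((s+d).factorial : ℝ) ≠ 0 := Nat.cast_ne_zero.2 (Nat.factorial_ne_zero _)
    have h3 : (s.factorial : ℝ) ≠ 0 := Nat.cast_ne_zero.2 (Nat.factorial_ne_zero _)
    have he2 : s + p + d = s + (p + d) := by omega
    rw [he2]
    field_simp
  calc ((s + p + d).factorial : ℝ) * U ^ s / ((s + d).factorial * s.factorial)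
      = (((s + p + d).factorial : ℝ) / ((s + d).factorial * s.factorial)) * U ^ s := by ring
    _ = (((s + (p+d)).choose p : ℝ) * p.factorial / s.factorial) * U ^ s := by rw [hc]
    _ = ∑ ij ∈ antidiagonal p,
        ((p.factorial : ℝ) * ((p + d).choose ij.2)) * ((s.choose ij.1 : ℝ) * U ^ s / s.factorial) := by
        rw [hv, Finset.sum_mul, Finset.sum_div, Finset.sum_mul]
        apply Finset.sum_congr rfl
        intro ij _
        ring

lemma L2a (p d : ℕ) (U : ℝ) :
    Summable (fun s : ℕ => ((s + p + d).factorial : ℝ) * U ^ s / ((s + d).factorial * s.factorial)) := by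
  rw [L2key]
  exact summable_sum fun ij _ => (L1a ij.1 U).mul_left _

lemma L2b (p d : ℕ) (U : ℝ) :
    ∑' s : ℕ, ((s + p + d).factorial : ℝ) * U ^ s / ((s + d).factorial * s.factorial)
    = Real.exp U * ∑ s ∈ range (p + 1),
        ((p.factorial : ℝ) * (p + d).factorial) * U ^ (p - s)
          / (s.factorial * (p - s).factorial * (p + d - s).factorial) := by
  rw [L2key]
  rw [Summable.tsum_finsetSum (f := fun (ij : ℕ × ℕ) (s : ℕ) =>
      ((p.factorial : ℝ) * ((p + d).choose ij.2)) * ((s.choose ij.1 : ℝ) * U ^ s / s.factorial))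
    (fun ij _ => (L1a ij.1 U).mul_left _)]
  have : ∀ ij ∈ antidiagonal p,
      (∑' s : ℕ, ((p.factorial : ℝ) * ((p + d).choose ij.2)) * ((s.choose ij.1 : ℝ) * U ^ s / s.factorial))
      = ((p.factorial : ℝ) * ((p + d).choose ij.2)) * (U ^ ij.1 / ij.1.factorial * Real.exp U) := by
    intro ij _
    rw [tsum_mul_left, L1b]
  rw [Finset.sum_congr rfl this, Finset.Nat.sum_antidiagonal_eq_sum_range_succ_mk]
  rw [← Finset.sum_range_reflect]
  rw [Finset.mul_sum]
  apply Finset.sum_congr rfl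
  intro s hs
  have hs' : s ≤ p := Nat.lt_succ_iff.1 (mem_range.1 hs)
  have h1 : p + 1 - 1 - s = p - s := by omega
  rw [h1]
  have h2 : p - (p - s) = s := by omega
  rw [h2]
  have hch : (((p+d).choose s : ℝ)) = ((p+d).factorial : ℝ) / (s.factorial * (p + d - s).factorial) := by
    exact_mod_cast Nat.cast_choose ℝ (by omega)
  rw [hch]
  have h3 : (s.factorial : ℝ) ≠ 0 := Nat.cast_ne_zero.2 (Nat.factorial_ne_zero _)
  have h4 : ((p-s).factorial : ℝ) ≠ 0 := Nat.cast_ne_zero.2 (Nat.factorial_ne_zero _)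
  have h5 : ((p+d-s).factorial : ℝ) ≠ 0 := Nat.cast_ne_zero.2 (Nat.factorial_ne_zero _)
  field_simp

noncomputable def fc (p p' : ℕ) (α : ℂ) (m : ℕ) : ℂ :=
  if p ≤ m ∧ p' ≤ m then
    (m.factorial : ℂ) * α ^ (m - p) * (starRingEnd ℂ α) ^ (m - p')
      / ((m - p).factorial * (m - p').factorial)
  else 0

noncomputable def gc (p p' : ℕ) (α : ℂ) (s : ℕ) : ℂ :=
  if s ≤ p ∧ s ≤ p' then
    (starRingEnd ℂ α) ^ (p - s) * α ^ (p' - s) * ((p.factorial : ℂ) * p'.factorial)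
      / ((s.factorial : ℂ) * (p - s).factorial * (p' - s).factorial)
  else 0

noncomputable def hre (p' : ℕ) (pp : ℕ) (U : ℝ) (m : ℕ) : ℝ :=
  if p' ≤ m then (m.factorial : ℝ) * U ^ (m - p') / ((m - pp).factorial * (m - p').factorial) else 0

lemma fc_eq (p d : ℕ) (α : ℂ) (m : ℕ) :
    fc p (p + d) α m = α ^ d * ((hre (p + d) p (Complex.normSq α) m : ℝ) : ℂ) := by
  unfold fc hre
  by_cases h : p + d ≤ m
  · rw [if_pos ⟨by omega, h⟩, if_pos h]
    have h1 : m - p = (m - (p + d)) + d := by omega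
    have h2 : α ^ (m - p) * (starRingEnd ℂ) α ^ (m - (p + d))
        = α ^ d * ((Complex.normSq α ^ (m - (p + d)) : ℝ) : ℂ) := by
      rw [h1, pow_add]
      rw [show α ^ (m - (p + d)) * α ^ d * (starRingEnd ℂ) α ^ (m - (p + d))
          = α ^ d * (α * starRingEnd ℂ α) ^ (m - (p + d)) by rw [mul_pow]; ring]
      rw [Complex.mul_conj, ← Complex.ofReal_pow]
    rw [mul_assoc, h2]
    push_cast
    ring
  · rw [if_neg (by omega), if_neg h]
    simp


lemma hre_shift (p d : ℕ) (U : ℝ) (s : ℕ) :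
    hre (p + d) p U (s + (p + d)) = ((s + p + d).factorial : ℝ) * U ^ s / ((s + d).factorial * s.factorial) := by
  unfold hre
  rw [if_pos (by omega)]
  have h1 : s + (p + d) - (p + d) = s := by omega
  have h2 : s + (p + d) - p = s + d := by omega
  have h3 : s + (p + d) = s + p + d := by omega
  rw [h1, h2, h3]

lemma hre_summable (p d : ℕ) (U : ℝ) : Summable (hre (p + d) p U) := by
  rw [← summable_nat_add_iff (p + d)]
  have : (fun s => hre (p + d) p U (s + (p + d)))
      = fun s : ℕ => ((s + p + d).factorial : ℝ) * U ^ s / ((s + d).factorial * s.factorial) := by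
    funext s; exact hre_shift p d U s
  rw [this]
  exact L2a p d U

lemma hre_tsum (p d : ℕ) (U : ℝ) :
    ∑' m : ℕ, hre (p + d) p U m
    = Real.exp U * ∑ s ∈ range (p + 1),
        ((p.factorial : ℝ) * (p + d).factorial) * U ^ (p - s)
          / (s.factorial * (p - s).factorial * (p + d - s).factorial) := by
  rw [← Summable.sum_add_tsum_nat_add (p + d) (hre_summable p d U)]
  have h0 : ∑ m ∈ range (p + d), hre (p + d) p U m = 0 := by
    apply Finset.sum_eq_zero
    intro m hm
    unfold hre
    rw [if_neg (by exact fun hc => absurd (mem_range.1 hm) (not_lt.2 hc))]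
  have h1 : (fun s => hre (p + d) p U (s + (p + d)))
      = fun s : ℕ => ((s + p + d).factorial : ℝ) * U ^ s / ((s + d).factorial * s.factorial) := by
    funext s; exact hre_shift p d U s
  rw [h0, zero_add, h1, L2b]

lemma fc_summable1 (p d : ℕ) (α : ℂ) : Summable (fc p (p + d) α) := by
  have : fc p (p + d) α = fun m => α ^ d * ((hre (p + d) p (Complex.normSq α) m : ℝ) : ℂ) := by
    funext m; exact fc_eq p d α m
  rw [this]
  exact (Complex.summable_ofReal.2 (hre_summable p d (Complex.normSq α))).mul_left _

lemma gc_eq (p d : ℕ) (α : ℂ) (s : ℕ) (hs : s ≤ p) :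
    gc p (p + d) α s = α ^ d *
      ((((p.factorial : ℝ) * (p + d).factorial) * Complex.normSq α ^ (p - s)
          / (s.factorial * (p - s).factorial * (p + d - s).factorial) : ℝ) : ℂ) := by
  unfold gc
  rw [if_pos ⟨hs, by omega⟩]
  have h1 : p + d - s = (p - s) + d := by omega
  have h2 : (starRingEnd ℂ) α ^ (p - s) * α ^ (p + d - s)
      = α ^ d * ((Complex.normSq α ^ (p - s) : ℝ) : ℂ) := by
    rw [h1, pow_add]
    rw [show (starRingEnd ℂ) α ^ (p - s) * (α ^ (p - s) * α ^ d)
        = α ^ d * (α * starRingEnd ℂ α) ^ (p - s) by rw [mul_pow]; ring]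
    rw [Complex.mul_conj, ← Complex.ofReal_pow]
  rw [h2]
  push_cast
  ring

lemma fc_tsum1 (p d : ℕ) (α : ℂ) :
    ∑' m : ℕ, fc p (p + d) α m
    = ((Real.exp (Complex.normSq α) : ℝ) : ℂ) * ∑ s ∈ range (p + 1), gc p (p + d) α s := by
  have h1 : fc p (p + d) α = fun m => α ^ d * ((hre (p + d) p (Complex.normSq α) m : ℝ) : ℂ) := by
    funext m; exact fc_eq p d α m
  rw [h1, tsum_mul_left, ← Complex.ofReal_tsum, hre_tsum]
  have h2 : ∑ s ∈ range (p + 1), gc p (p + d) α s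
      = α ^ d * ((∑ s ∈ range (p + 1),
        ((p.factorial : ℝ) * (p + d).factorial) * Complex.normSq α ^ (p - s)
          / (s.factorial * (p - s).factorial * (p + d - s).factorial) : ℝ) : ℂ) := by
    rw [Complex.ofReal_sum, Finset.mul_sum]
    apply Finset.sum_congr rfl
    intro s hs
    exact gc_eq p d α s (Nat.lt_succ_iff.1 (mem_range.1 hs))
  rw [h2, Complex.ofReal_mul]
  ring



lemma fc_star (p p' : ℕ) (α : ℂ) (m : ℕ) : fc p p' α m = star (fc p' p α m) := by
  unfold fc
  by_cases h : p ≤ m ∧ p' ≤ m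
  · rw [if_pos h, if_pos (⟨h.2, h.1⟩ : p' ≤ m ∧ p ≤ m)]
    simp only [star_div₀, star_mul, star_pow, star_natCast, starRingEnd_apply, star_star]
    ring
  · rw [if_neg h, if_neg (show ¬(p' ≤ m ∧ p ≤ m) from fun hc => h ⟨hc.2, hc.1⟩), star_zero]

lemma gc_star (p p' : ℕ) (α : ℂ) (s : ℕ) : gc p p' α s = star (gc p' p α s) := by
  unfold gc
  by_cases h : s ≤ p ∧ s ≤ p'
  · rw [if_pos h, if_pos (⟨h.2, h.1⟩ : s ≤ p' ∧ s ≤ p)]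
    simp only [star_div₀, star_mul, star_pow, star_natCast, starRingEnd_apply, star_star]
    ring
  · rw [if_neg h, if_neg (show ¬(s ≤ p' ∧ s ≤ p) from fun hc => h ⟨hc.2, hc.1⟩), star_zero]

lemma fc_summable (p p' : ℕ) (α : ℂ) : Summable (fc p p' α) := by
  rcases le_or_gt p p' with hle | hlt
  · obtain ⟨d, rfl⟩ : ∃ d, p' = p + d := ⟨p' - p, by omega⟩
    exact fc_summable1 p d α
  · have h : fc p p' α = fun m => star (fc p' p α m) := funext (fc_star p p' α)
    rw [h]
    obtain ⟨d, rfl⟩ : ∃ d, p = p' + d := ⟨p - p', by omega⟩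
    exact (fc_summable1 p' d α).star

lemma fc_tsum (p p' : ℕ) (α : ℂ) (K : ℕ) (hK : min p p' < K) :
    ∑' m : ℕ, fc p p' α m
    = ((Real.exp (Complex.normSq α) : ℝ) : ℂ) * ∑ s ∈ range K, gc p p' α s := by
  rcases le_or_gt p p' with hle | hlt
  · obtain ⟨d, rfl⟩ : ∃ d, p' = p + d := ⟨p' - p, by omega⟩
    rw [fc_tsum1 p d α]
    congr 1
    apply Finset.sum_subset (Finset.range_subset_range.2 (by simp at hK; omega))
    intro s _ hs
    have hsp : ¬ s ≤ p := fun hc => hs (mem_range.2 (by omega))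
    unfold gc
    rw [if_neg (fun hc => hsp hc.1)]
  · have h : (fun m => fc p p' α m) = fun m => star (fc p' p α m) := funext (fc_star p p' α)
    rw [h, ← tsum_star]
    obtain ⟨d, rfl⟩ : ∃ d, p = p' + d := ⟨p - p', by omega⟩
    rw [fc_tsum1 p' d α, star_mul', star_sum]
    congr 1
    · exact Complex.conj_ofReal _
    · rw [show ∑ x ∈ range (p' + 1), star (gc p' (p' + d) α x)
          = ∑ x ∈ range (p' + 1), gc (p' + d) p' α x from
          Finset.sum_congr rfl (fun x _ => (gc_star (p' + d) p' α x).symm)]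
      apply Finset.sum_subset (Finset.range_subset_range.2 (by simp at hK; omega))
      intro s _ hs
      have hsp : ¬ s ≤ p' := fun hc => hs (mem_range.2 (by omega))
      unfold gc
      rw [if_neg (fun hc => hsp hc.2)]

noncomputable def Pc (n : ℕ) (u : ℕ → ℂ) (α : ℂ) (m : ℕ) : ℂ :=
  ∑ p ∈ range (n + 1), (if p ≤ m then α ^ (m - p) * u p / ((m - p).factorial : ℂ) else 0)

noncomputable def vc (n : ℕ) (u : ℕ → ℂ) (α : ℂ) (s : ℕ) : ℂ :=
  ∑ p ∈ range (n + 1),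
    (if s ≤ p then (starRingEnd ℂ) α ^ (p - s) * (p.factorial : ℂ) * u p / ((p - s).factorial : ℂ) else 0)

lemma term_eq (u : ℕ → ℂ) (α : ℂ) (m p p' : ℕ) :
    (m.factorial : ℂ) * ((if p ≤ m then α ^ (m - p) * u p / ((m - p).factorial : ℂ) else 0) *
      (starRingEnd ℂ) (if p' ≤ m then α ^ (m - p') * u p' / ((m - p').factorial : ℂ) else 0))
    = u p * (starRingEnd ℂ) (u p') * fc p p' α m := by
  unfold fc
  by_cases h : p ≤ m
  · by_cases h' : p' ≤ m
    · rw [if_pos h, if_pos h', if_pos (⟨h, h'⟩ : p ≤ m ∧ p' ≤ m)]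
      simp only [map_mul, map_div₀, map_pow, map_natCast]
      ring
    · rw [if_pos h, if_neg h', if_neg (show ¬(p ≤ m ∧ p' ≤ m) from fun hc => h' hc.2)]
      simp
  · rw [if_neg h, if_neg (show ¬(p ≤ m ∧ p' ≤ m) from fun hc => h hc.1)]
    simp

lemma pointwise (n : ℕ) (u : ℕ → ℂ) (α : ℂ) (m : ℕ) :
    (m.factorial : ℝ) * ‖Pc n u α m‖ ^ 2
    = ∑ p ∈ range (n + 1), ∑ p' ∈ range (n + 1),
        (u p * (starRingEnd ℂ) (u p') * fc p p' α m).re := by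
  have h1 : (m.factorial : ℝ) * ‖Pc n u α m‖ ^ 2
      = ((m.factorial : ℂ) * (Pc n u α m * (starRingEnd ℂ) (Pc n u α m))).re := by
    rw [Complex.mul_conj, ← Complex.ofReal_natCast, ← Complex.ofReal_mul, Complex.ofReal_re,
      Complex.sq_norm]
  rw [h1]
  have h2 : (m.factorial : ℂ) * (Pc n u α m * (starRingEnd ℂ) (Pc n u α m))
      = ∑ p ∈ range (n + 1), ∑ p' ∈ range (n + 1), u p * (starRingEnd ℂ) (u p') * fc p p' α m := by
    unfold Pc
    rw [map_sum, Finset.sum_mul_sum, Finset.mul_sum]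
    refine Finset.sum_congr rfl fun p _ => ?_
    rw [Finset.mul_sum]
    exact Finset.sum_congr rfl fun p' _ => term_eq u α m p p'
  rw [h2, Complex.re_sum]
  exact Finset.sum_congr rfl fun p _ => (Complex.re_sum _ _)

lemma vv (n : ℕ) (u : ℕ → ℂ) (α : ℂ) (s : ℕ) :
    ∑ p ∈ range (n + 1), ∑ p' ∈ range (n + 1), u p * (starRingEnd ℂ) (u p') * gc p p' α s
    = (1 / (s.factorial : ℂ)) * (vc n u α s * (starRingEnd ℂ) (vc n u α s)) := by
  unfold vc
  rw [map_sum, Finset.sum_mul_sum, Finset.mul_sum]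
  refine Finset.sum_congr rfl fun p _ => ?_
  rw [Finset.mul_sum]
  refine Finset.sum_congr rfl fun p' _ => ?_
  unfold gc
  by_cases h : s ≤ p
  · by_cases h' : s ≤ p'
    · rw [if_pos h, if_pos h', if_pos (⟨h, h'⟩ : s ≤ p ∧ s ≤ p')]
      simp only [map_mul, map_div₀, map_pow, map_natCast, starRingEnd_self_apply]
      have hs : (s.factorial : ℂ) ≠ 0 := Nat.cast_ne_zero.2 (Nat.factorial_ne_zero _)
      field_simp
    · rw [if_pos h, if_neg h', if_neg (show ¬(s ≤ p ∧ s ≤ p') from fun hc => h' hc.2)]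
      simp
  · rw [if_neg h, if_neg (show ¬(s ≤ p ∧ s ≤ p') from fun hc => h hc.1)]
    simp

lemma re_summable {f : ℕ → ℂ} (h : Summable f) : Summable (fun x => (f x).re) :=
  ⟨_, Complex.hasSum_re h.hasSum⟩

lemma L5a (n : ℕ) (u : ℕ → ℂ) (α : ℂ) :
    Summable (fun m => (m.factorial : ℝ) * ‖Pc n u α m‖ ^ 2) := by
  have h : (fun m => (m.factorial : ℝ) * ‖Pc n u α m‖ ^ 2)
      = fun m => ∑ p ∈ range (n + 1), ∑ p' ∈ range (n + 1),
          (u p * (starRingEnd ℂ) (u p') * fc p p' α m).re := funext (pointwise n u α)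
  rw [h]
  exact summable_sum fun p _ => summable_sum fun p' _ =>
    re_summable ((fc_summable p p' α).mul_left _)

lemma L5b (n : ℕ) (u : ℕ → ℂ) (α : ℂ) :
    ∑' m : ℕ, (m.factorial : ℝ) * ‖Pc n u α m‖ ^ 2
    = Real.exp (Complex.normSq α) * ∑ s ∈ range (n + 1),
        (1 / (s.factorial : ℝ)) * ‖vc n u α s‖ ^ 2 := by
  rw [tsum_congr (pointwise n u α)]
  rw [Summable.tsum_finsetSum (fun p _ => summable_sum fun p' _ => re_summable ((fc_summable p p' α).mul_left _))]
  have step1 : ∀ p ∈ range (n + 1),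
      (∑' m : ℕ, ∑ p' ∈ range (n + 1), (u p * (starRingEnd ℂ) (u p') * fc p p' α m).re)
      = ∑ p' ∈ range (n + 1), (∑' m : ℕ, (u p * (starRingEnd ℂ) (u p') * fc p p' α m).re) := by
    intro p _
    exact Summable.tsum_finsetSum (fun p' _ => re_summable ((fc_summable p p' α).mul_left _))
  rw [Finset.sum_congr rfl step1]
  have step2 : ∀ p ∈ range (n + 1), ∀ p' ∈ range (n + 1),
      (∑' m : ℕ, (u p * (starRingEnd ℂ) (u p') * fc p p' α m).re)
      = (((Real.exp (Complex.normSq α) : ℝ) : ℂ) *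
          (u p * (starRingEnd ℂ) (u p') * ∑ s ∈ range (n + 1), gc p p' α s)).re := by
    intro p hp p' _
    rw [← Complex.re_tsum ((fc_summable p p' α).mul_left _), tsum_mul_left,
      fc_tsum p p' α (n + 1) (by have := mem_range.1 hp; omega)]
    congr 1
    ring
  rw [Finset.sum_congr rfl (fun p hp => Finset.sum_congr rfl (step2 p hp))]
  have step3 : ∑ p ∈ range (n + 1), ∑ p' ∈ range (n + 1),
      (((Real.exp (Complex.normSq α) : ℝ) : ℂ) *
        (u p * (starRingEnd ℂ) (u p') * ∑ s ∈ range (n + 1), gc p p' α s)).re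
      = (((Real.exp (Complex.normSq α) : ℝ) : ℂ) *
          ∑ s ∈ range (n + 1), (1 / (s.factorial : ℂ)) *
            (vc n u α s * (starRingEnd ℂ) (vc n u α s))).re := by
    have hre2 : ∑ p ∈ range (n + 1), ∑ p' ∈ range (n + 1),
        (((Real.exp (Complex.normSq α) : ℝ) : ℂ) *
          (u p * (starRingEnd ℂ) (u p') * ∑ s ∈ range (n + 1), gc p p' α s)).re
        = (∑ p ∈ range (n + 1), ∑ p' ∈ range (n + 1),
            ((Real.exp (Complex.normSq α) : ℝ) : ℂ) *
              (u p * (starRingEnd ℂ) (u p') * ∑ s ∈ range (n + 1), gc p p' α s)).re := by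
      rw [Complex.re_sum]
      exact Finset.sum_congr rfl fun p _ => (Complex.re_sum _ _).symm
    rw [hre2]
    congr 1
    rw [show ∑ p ∈ range (n + 1), ∑ p' ∈ range (n + 1),
        ((Real.exp (Complex.normSq α) : ℝ) : ℂ) *
          (u p * (starRingEnd ℂ) (u p') * ∑ s ∈ range (n + 1), gc p p' α s)
        = ((Real.exp (Complex.normSq α) : ℝ) : ℂ) * ∑ p ∈ range (n + 1), ∑ p' ∈ range (n + 1),
            u p * (starRingEnd ℂ) (u p') * ∑ s ∈ range (n + 1), gc p p' α s by
      rw [Finset.mul_sum]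
      exact Finset.sum_congr rfl fun p _ => (Finset.mul_sum _ _ _).symm]
    congr 1
    have h1 : ∀ p ∈ range (n + 1),
        ∑ p' ∈ range (n + 1), u p * (starRingEnd ℂ) (u p') * ∑ s ∈ range (n + 1), gc p p' α s
        = ∑ s ∈ range (n + 1), ∑ p' ∈ range (n + 1), u p * (starRingEnd ℂ) (u p') * gc p p' α s := by
      intro p _
      rw [Finset.sum_congr rfl fun p' (_ : p' ∈ range (n+1)) => Finset.mul_sum _ _ _]
      exact Finset.sum_comm
    rw [Finset.sum_congr rfl h1, Finset.sum_comm]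
    exact Finset.sum_congr rfl fun s _ => vv n u α s
  rw [step3]
  have h4 : ∑ s ∈ range (n + 1), (1 / (s.factorial : ℂ)) *
      (vc n u α s * (starRingEnd ℂ) (vc n u α s))
      = ((∑ s ∈ range (n + 1), (1 / (s.factorial : ℝ)) * ‖vc n u α s‖ ^ 2 : ℝ) : ℂ) := by
    rw [Complex.ofReal_sum]
    refine Finset.sum_congr rfl fun s _ => ?_
    rw [Complex.mul_conj, Complex.ofReal_mul, Complex.sq_norm]
    congr 1
    rw [Complex.ofReal_div]
    norm_num
  rw [h4, ← Complex.ofReal_mul, Complex.ofReal_re]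


noncomputable def Sig (β : ℂ) (m n : ℕ) : ℂ :=
  ∑ k ∈ Finset.range (n + 1),
      if n - k ≤ m then
        ((-(starRingEnd ℂ) β) ^ k / (Nat.factorial k : ℂ)) *
          (β ^ (m - (n - k)) / (Nat.factorial (m - (n - k)) : ℂ)) *
          ((Real.sqrt ((Nat.factorial n : ℝ) * (Nat.factorial m : ℝ)) /
            (Nat.factorial (n - k) : ℝ) : ℝ) : ℂ)
      else 0

noncomputable def αD (β : ℂ) (t : ℝ) : ℂ := (Real.exp (t/2) : ℂ) * β
noncomputable def γD (β : ℂ) (t : ℝ) : ℂ := (Real.exp (-(t/2)) : ℂ) * (starRingEnd ℂ) β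
noncomputable def uD (β : ℂ) (t : ℝ) (n : ℕ) : ℕ → ℂ := fun p =>
  (-(γD β t)) ^ (n - p) * (Real.sqrt n.factorial : ℂ) / (((n - p).factorial : ℂ) * (p.factorial : ℂ))

lemma sigma_eq (β : ℂ) (t : ℝ) (n m : ℕ) :
    ((Real.exp (t * ((m : ℝ) - n) / 2) : ℝ) : ℂ) * Sig β m n
    = (Real.sqrt m.factorial : ℂ) * Pc n (uD β t n) (αD β t) m := by
  unfold Sig Pc
  rw [← Finset.sum_range_reflect (fun k =>
      if n - k ≤ m then
        ((-(starRingEnd ℂ) β) ^ k / (Nat.factorial k : ℂ)) *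
          (β ^ (m - (n - k)) / (Nat.factorial (m - (n - k)) : ℂ)) *
          ((Real.sqrt ((Nat.factorial n : ℝ) * (Nat.factorial m : ℝ)) /
            (Nat.factorial (n - k) : ℝ) : ℝ) : ℂ)
      else 0) (n + 1)]
  rw [Finset.mul_sum, Finset.mul_sum]
  refine Finset.sum_congr rfl fun p hp => ?_
  have hpn : p ≤ n := Nat.lt_succ_iff.1 (mem_range.1 hp)
  have h1 : n + 1 - 1 - p = n - p := by omega
  have h2 : n - (n - p) = p := by omega
  rw [h1, h2]
  by_cases hpm : p ≤ m
  · rw [if_pos hpm, if_pos hpm]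
    unfold uD αD γD
    have hsq : (Real.sqrt ((n.factorial : ℝ) * (m.factorial : ℝ)) : ℝ)
        = Real.sqrt n.factorial * Real.sqrt m.factorial := Real.sqrt_mul (by positivity) _
    have hneg : -((Real.exp (-(t/2)) : ℂ) * (starRingEnd ℂ) β)
        = (Real.exp (-(t/2)) : ℂ) * (-(starRingEnd ℂ) β) := by ring
    rw [hneg, mul_pow, mul_pow]
    have hexp : ((Real.exp (t * ((m : ℝ) - n) / 2) : ℝ) : ℂ)
        = ((Real.exp (t/2) : ℂ)) ^ (m - p) * ((Real.exp (-(t/2)) : ℂ)) ^ (n - p) := by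
      rw [← Complex.ofReal_pow, ← Complex.ofReal_pow, ← Complex.ofReal_mul]
      congr 1
      rw [← Real.exp_nat_mul, ← Real.exp_nat_mul, ← Real.exp_add]
      congr 1
      have c1 : ((m - p : ℕ) : ℝ) = (m : ℝ) - p := by
        rw [Nat.cast_sub hpm]
      have c2 : ((n - p : ℕ) : ℝ) = (n : ℝ) - p := by
        rw [Nat.cast_sub hpn]
      rw [c1, c2]
      ring
    rw [hexp]
    push_cast [hsq]
    ring
  · rw [if_neg hpm, if_neg hpm]
    simp

lemma claimA (β : ℂ) (t : ℝ) (n m : ℕ) :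
    Real.exp (t * ((m : ℝ) - n)) * (‖Dmat β m n‖) ^ 2
    = Real.exp (-(‖β‖) ^ 2) *
        ((m.factorial : ℝ) * (‖Pc n (uD β t n) (αD β t) m‖) ^ 2) := by
  have hD : ‖Dmat β m n‖
      = Real.exp (-(‖β‖) ^ 2 / 2) * ‖Sig β m n‖ := by
    unfold Dmat Sig
    rw [norm_mul, Complex.norm_exp]
    congr 2
    simp [Complex.div_re, ← Complex.ofReal_pow]
  have habs : Real.exp (t * ((m : ℝ) - n) / 2) * ‖Sig β m n‖
      = Real.sqrt m.factorial * ‖Pc n (uD β t n) (αD β t) m‖ := by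
    have := congrArg (fun z : ℂ => ‖z‖) (sigma_eq β t n m)
    rwa [norm_mul, norm_mul, Complex.norm_real, Complex.norm_real, Real.norm_eq_abs, Real.norm_eq_abs,
      abs_of_nonneg (Real.exp_pos _).le, abs_of_nonneg (Real.sqrt_nonneg _)] at this
  have e1 : Real.exp (t * ((m : ℝ) - n)) = (Real.exp (t * ((m : ℝ) - n) / 2)) ^ 2 := by
    rw [← Real.exp_nat_mul]
    congr 1
    ring
  have e2 : Real.exp (-(‖β‖) ^ 2) = (Real.exp (-(‖β‖) ^ 2 / 2)) ^ 2 := by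
    rw [← Real.exp_nat_mul]
    congr 1
    ring
  have e3 : (Real.sqrt m.factorial) ^ 2 = (m.factorial : ℝ) :=
    Real.sq_sqrt (by positivity)
  calc Real.exp (t * ((m : ℝ) - n)) * (‖Dmat β m n‖) ^ 2
      = (Real.exp (-(‖β‖) ^ 2 / 2)) ^ 2 *
          (Real.exp (t * ((m : ℝ) - n) / 2) * ‖Sig β m n‖) ^ 2 := by
        rw [hD, e1]; ring
    _ = (Real.exp (-(‖β‖) ^ 2 / 2)) ^ 2 *
          (Real.sqrt m.factorial * ‖Pc n (uD β t n) (αD β t) m‖) ^ 2 := by rw [habs]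
    _ = Real.exp (-(‖β‖) ^ 2) *
        ((m.factorial : ℝ) * (‖Pc n (uD β t n) (αD β t) m‖) ^ 2) := by
        rw [e2, mul_pow, e3]

lemma binom_div (a b : ℂ) (N : ℕ) :
    ∑ j ∈ range (N + 1), a ^ j * b ^ (N - j) / ((j.factorial : ℂ) * ((N - j).factorial : ℂ))
    = (a + b) ^ N / (N.factorial : ℂ) := by
  rw [add_pow, Finset.sum_div]
  refine Finset.sum_congr rfl fun j hj => ?_
  have hjN : j ≤ N := Nat.lt_succ_iff.1 (mem_range.1 hj)
  have hch : ((N.choose j : ℕ) : ℂ) = (N.factorial : ℂ) / ((j.factorial : ℂ) * ((N - j).factorial : ℂ)) :=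
    Nat.cast_choose ℂ hjN
  rw [hch]
  have h1 : (N.factorial : ℂ) ≠ 0 := Nat.cast_ne_zero.2 (Nat.factorial_ne_zero _)
  have h2 : (j.factorial : ℂ) ≠ 0 := Nat.cast_ne_zero.2 (Nat.factorial_ne_zero _)
  have h3 : ((N - j).factorial : ℂ) ≠ 0 := Nat.cast_ne_zero.2 (Nat.factorial_ne_zero _)
  field_simp

lemma vc_eq (β : ℂ) (t : ℝ) (n s : ℕ) (hs : s ≤ n) :
    vc n (uD β t n) (αD β t) s
    = (Real.sqrt n.factorial : ℂ) *
        ((starRingEnd ℂ) (αD β t) - γD β t) ^ (n - s) / (((n - s).factorial : ℂ)) := by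
  unfold vc
  have hterm : ∀ p, s ≤ p → p ≤ n →
      (starRingEnd ℂ) (αD β t) ^ (p - s) * (p.factorial : ℂ) * (uD β t n p) / ((p - s).factorial : ℂ)
      = (Real.sqrt n.factorial : ℂ) *
          ((starRingEnd ℂ) (αD β t) ^ (p - s) * (-(γD β t)) ^ (n - p)
            / (((p - s).factorial : ℂ) * (((n - p).factorial : ℂ)))) := by
    intro p _ _
    unfold uD
    have h2 : (p.factorial : ℂ) ≠ 0 := Nat.cast_ne_zero.2 (Nat.factorial_ne_zero _)
    have h3 : ((n - p).factorial : ℂ) ≠ 0 := Nat.cast_ne_zero.2 (Nat.factorial_ne_zero _)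
    have h4 : (((p - s)).factorial : ℂ) ≠ 0 := Nat.cast_ne_zero.2 (Nat.factorial_ne_zero _)
    field_simp
  have hsplit : ∑ p ∈ range (n + 1),
      (if s ≤ p then (starRingEnd ℂ) (αD β t) ^ (p - s) * (p.factorial : ℂ) * (uD β t n p)
        / ((p - s).factorial : ℂ) else 0)
      = ∑ j ∈ range (n - s + 1),
        (starRingEnd ℂ) (αD β t) ^ j * (-(γD β t)) ^ (n - s - j)
          * ((Real.sqrt n.factorial : ℂ) / ((j.factorial : ℂ) * (((n - s - j).factorial : ℂ)))) := by
    conv_lhs => rw [Finset.range_eq_Ico]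
    rw [← Finset.sum_Ico_consecutive _ (Nat.zero_le s) (by omega : s ≤ n + 1)]
    have hz : ∑ p ∈ Finset.Ico 0 s,
        (if s ≤ p then (starRingEnd ℂ) (αD β t) ^ (p - s) * (p.factorial : ℂ) * (uD β t n p)
          / ((p - s).factorial : ℂ) else 0) = 0 := by
      apply Finset.sum_eq_zero
      intro p hp
      rw [if_neg (by simp at hp; omega)]
    rw [hz, zero_add, Finset.sum_Ico_eq_sum_range]
    have hrange : n + 1 - s = n - s + 1 := by omega
    rw [hrange]
    refine Finset.sum_congr rfl fun j hj => ?_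
    have hjn : j ≤ n - s := Nat.lt_succ_iff.1 (mem_range.1 hj)
    rw [if_pos (by omega : s ≤ s + j)]
    rw [hterm (s + j) (by omega) (by omega)]
    have c1 : s + j - s = j := by omega
    have c2 : n - (s + j) = n - s - j := by omega
    rw [c1, c2]
    ring
  rw [hsplit]
  have : ∑ j ∈ range (n - s + 1),
      (starRingEnd ℂ) (αD β t) ^ j * (-(γD β t)) ^ (n - s - j)
        * ((Real.sqrt n.factorial : ℂ) / ((j.factorial : ℂ) * (((n - s - j).factorial : ℂ))))
      = (Real.sqrt n.factorial : ℂ) * ∑ j ∈ range (n - s + 1),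
        (starRingEnd ℂ) (αD β t) ^ j * (-(γD β t)) ^ (n - s - j)
          / ((j.factorial : ℂ) * (((n - s - j).factorial : ℂ))) := by
    rw [Finset.mul_sum]
    refine Finset.sum_congr rfl fun j _ => ?_
    ring
  rw [this, binom_div]
  rw [mul_div_assoc, sub_eq_add_neg]

lemma L7 (n : ℕ) (W : ℝ) (hW : 0 ≤ W) :
    ∑ s ∈ range (n + 1),
      (1 / (s.factorial : ℝ)) * ((n.factorial : ℝ) * W ^ (n - s) / (((n - s).factorial : ℝ)) ^ 2)
    ≤ Real.exp ((n : ℝ) * W) := by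
  rw [← Finset.sum_range_reflect]
  have step : ∀ k ∈ range (n + 1),
      (1 / (((n + 1 - 1 - k).factorial : ℝ))) *
        ((n.factorial : ℝ) * W ^ (n - (n + 1 - 1 - k)) / (((n - (n + 1 - 1 - k)).factorial : ℝ)) ^ 2)
      ≤ ((n : ℝ) * W) ^ k / (k.factorial : ℝ) := by
    intro k hk
    have hkn : k ≤ n := Nat.lt_succ_iff.1 (mem_range.1 hk)
    have h1 : n + 1 - 1 - k = n - k := by omega
    have h2 : n - (n - k) = k := by omega
    rw [h1, h2]
    have hch : ((n.choose k : ℕ) : ℝ) = (n.factorial : ℝ) / ((k.factorial : ℝ) * (((n - k).factorial : ℝ))) :=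
      Nat.cast_choose ℝ hkn
    have hle : ((n.choose k : ℕ) : ℝ) ≤ (n : ℝ) ^ k := by
      exact_mod_cast Nat.choose_le_pow n k
    have hf1 : (0:ℝ) < (k.factorial : ℝ) := by positivity
    have hf2 : (0:ℝ) < (((n - k).factorial : ℝ)) := by positivity
    have key : (1 / (((n - k).factorial : ℝ))) * ((n.factorial : ℝ) * W ^ k / ((k.factorial : ℝ)) ^ 2)
        = ((n.choose k : ℕ) : ℝ) * W ^ k / (k.factorial : ℝ) := by
      rw [hch]; ring
    rw [key, mul_pow]
    have hWk : (0:ℝ) ≤ W ^ k := by positivity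
    exact (div_le_div_iff_of_pos_right hf1).2 (mul_le_mul_of_nonneg_right hle hWk)
  calc ∑ k ∈ range (n + 1), _ ≤ ∑ k ∈ range (n + 1), ((n : ℝ) * W) ^ k / (k.factorial : ℝ) :=
        Finset.sum_le_sum step
    _ ≤ Real.exp ((n : ℝ) * W) := Real.sum_le_exp_of_nonneg (by positivity) (n + 1)

lemma normSq_alpha (β : ℂ) (t : ℝ) :
    Complex.normSq (αD β t) = Real.exp t * (‖β‖) ^ 2 := by
  unfold αD
  rw [Complex.normSq_mul, Complex.normSq_ofReal, ← Complex.sq_norm]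
  congr 1
  rw [← Real.exp_add]
  norm_num

lemma delta_eq (β : ℂ) (t : ℝ) :
    (starRingEnd ℂ) (αD β t) - γD β t
    = ((Real.exp (t/2) - Real.exp (-(t/2)) : ℝ) : ℂ) * (starRingEnd ℂ) β := by
  unfold αD γD
  rw [map_mul, Complex.conj_ofReal]
  push_cast
  ring

lemma vc_abs_sq (β : ℂ) (t : ℝ) (n s : ℕ) (hs : s ≤ n) :
    ‖vc n (uD β t n) (αD β t) s‖ ^ 2
    = (n.factorial : ℝ) * ((Real.exp (t/2) - Real.exp (-(t/2))) ^ 2 * (‖β‖) ^ 2) ^ (n - s)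
        / (((n - s).factorial : ℝ)) ^ 2 := by
  rw [vc_eq β t n s hs, delta_eq]
  rw [norm_div, norm_mul, norm_pow, norm_mul, Complex.norm_real, Complex.norm_real, Real.norm_eq_abs, Real.norm_eq_abs, Complex.norm_natCast]
  rw [Complex.norm_conj]
  rw [abs_of_nonneg (Real.sqrt_nonneg _)]
  rw [div_pow, mul_pow, mul_pow, Real.sq_sqrt (by positivity)]
  congr 1
  rw [mul_pow, ← pow_mul, ← pow_mul, show (n-s)*2 = 2*(n-s) from mul_comm _ _,
    pow_mul, pow_mul, sq_abs, ← mul_pow]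

lemma main_bound (β : ℂ) (t : ℝ) (n : ℕ) :
    Summable (fun m : ℕ => Real.exp (t * ((m : ℝ) - n)) * (‖Dmat β m n‖) ^ 2) ∧
    ∑' m : ℕ, Real.exp (t * ((m : ℝ) - n)) * (‖Dmat β m n‖) ^ 2
      ≤ Real.exp (Real.exp t * (‖β‖) ^ 2
          + (n : ℝ) * ((Real.exp (t/2) - Real.exp (-(t/2))) ^ 2 * (‖β‖) ^ 2)) := by
  have h1 : (fun m : ℕ => Real.exp (t * ((m : ℝ) - n)) * (‖Dmat β m n‖) ^ 2)
      = fun m : ℕ => Real.exp (-(‖β‖) ^ 2) *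
          ((m.factorial : ℝ) * (‖Pc n (uD β t n) (αD β t) m‖) ^ 2) :=
    funext (claimA β t n)
  constructor
  · rw [h1]
    exact (L5a n (uD β t n) (αD β t)).mul_left _
  · rw [h1, tsum_mul_left, L5b, normSq_alpha]
    set W := (Real.exp (t/2) - Real.exp (-(t/2))) ^ 2 * (‖β‖) ^ 2 with hW
    have hWnn : 0 ≤ W := by positivity
    have hS : ∑ s ∈ range (n + 1),
        (1 / (s.factorial : ℝ)) * ‖vc n (uD β t n) (αD β t) s‖ ^ 2
        ≤ Real.exp ((n : ℝ) * W) := by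
      have heq : ∀ s ∈ range (n + 1),
          (1 / (s.factorial : ℝ)) * ‖vc n (uD β t n) (αD β t) s‖ ^ 2
          = (1 / (s.factorial : ℝ)) * ((n.factorial : ℝ) * W ^ (n - s) / (((n - s).factorial : ℝ)) ^ 2) := by
        intro s hs
        rw [vc_abs_sq β t n s (Nat.lt_succ_iff.1 (mem_range.1 hs))]
      rw [Finset.sum_congr rfl heq]
      exact L7 n W hWnn
    calc Real.exp (-(‖β‖) ^ 2) * (Real.exp (Real.exp t * ‖β‖ ^ 2) *
          ∑ s ∈ range (n + 1), (1 / (s.factorial : ℝ)) * ‖vc n (uD β t n) (αD β t) s‖ ^ 2)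
        ≤ 1 * (Real.exp (Real.exp t * ‖β‖ ^ 2) * Real.exp ((n : ℝ) * W)) := by
          apply mul_le_mul
          · exact Real.exp_le_one_iff.2 (neg_nonpos.2 (by positivity))
          · exact mul_le_mul_of_nonneg_left hS (Real.exp_pos _).le
          · apply mul_nonneg (Real.exp_pos _).le
            apply Finset.sum_nonneg
            intro s _
            positivity
          · norm_num
      _ = Real.exp (Real.exp t * (‖β‖) ^ 2 + (n : ℝ) * W) := by
          rw [one_mul, ← Real.exp_add]
      _ ≤ Real.exp (Real.exp t * (‖β‖) ^ 2 + (n : ℝ) * W) := le_refl _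

lemma weight (n m : ℕ) :
    |Real.sqrt m - Real.sqrt n| * Real.sqrt ((n : ℝ) + 1) ≤ 2 * |(m : ℝ) - (n : ℝ)| := by
  have ha0 : (0:ℝ) ≤ Real.sqrt m := Real.sqrt_nonneg _
  have hb0 : (0:ℝ) ≤ Real.sqrt n := Real.sqrt_nonneg _
  have hc0 : (0:ℝ) ≤ Real.sqrt ((n : ℝ) + 1) := Real.sqrt_nonneg _
  have ha : (Real.sqrt m) ^ 2 = (m : ℝ) := Real.sq_sqrt (by positivity)
  have hb : (Real.sqrt n) ^ 2 = (n : ℝ) := Real.sq_sqrt (by positivity)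
  have hc : (Real.sqrt ((n : ℝ) + 1)) ^ 2 = (n : ℝ) + 1 := Real.sq_sqrt (by positivity)
  rcases lt_trichotomy n m with hnm | hnm | hnm
  · -- n < m
    have hba : Real.sqrt n ≤ Real.sqrt m := Real.sqrt_le_sqrt (by exact_mod_cast hnm.le)
    have hca : Real.sqrt ((n : ℝ) + 1) ≤ Real.sqrt m := by
      apply Real.sqrt_le_sqrt
      have : (n : ℝ) + 1 ≤ m := by exact_mod_cast hnm
      linarith
    have h1 : |Real.sqrt m - Real.sqrt n| = Real.sqrt m - Real.sqrt n := abs_of_nonneg (by linarith)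
    have h2 : |(m : ℝ) - (n : ℝ)| = (m : ℝ) - n := abs_of_nonneg (by
      have : (n : ℝ) ≤ m := by exact_mod_cast hnm.le
      linarith)
    rw [h1, h2]
    nlinarith [mul_le_mul_of_nonneg_left hca (by linarith : (0:ℝ) ≤ Real.sqrt m - Real.sqrt n)]
  · subst hnm
    simp
  · -- m < n
    have hba : Real.sqrt m ≤ Real.sqrt n := Real.sqrt_le_sqrt (by exact_mod_cast hnm.le)
    have hn1 : (1:ℝ) ≤ n := by
      have : 1 ≤ n := by omega
      exact_mod_cast this
    have hcb : Real.sqrt ((n : ℝ) + 1) ≤ 2 * Real.sqrt n := by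
      have h4 : Real.sqrt ((n : ℝ) + 1) ≤ Real.sqrt (4 * n) := Real.sqrt_le_sqrt (by linarith)
      have h5 : Real.sqrt (4 * (n:ℝ)) = 2 * Real.sqrt n := by
        rw [show (4 : ℝ) * n = 2^2 * n by norm_num, Real.sqrt_mul (by positivity),
          Real.sqrt_sq (by norm_num)]
      linarith [h4, h5.le]
    have h1 : |Real.sqrt m - Real.sqrt n| = Real.sqrt n - Real.sqrt m := by
      rw [abs_of_nonpos (by linarith)]; ring
    have h2 : |(m : ℝ) - (n : ℝ)| = (n : ℝ) - m := by
      rw [abs_of_nonpos (by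
        have : (m : ℝ) ≤ n := by exact_mod_cast hnm.le
        linarith)]
      ring
    rw [h1, h2]
    nlinarith [mul_le_mul_of_nonneg_left hcb (by linarith : (0:ℝ) ≤ Real.sqrt n - Real.sqrt m)]

lemma sinh_bound (a : ℝ) (ha : 0 ≤ a) : Real.exp a - Real.exp (-a) ≤ 2 * a * Real.exp a := by
  have h1 : Real.exp (-a) = Real.exp a * Real.exp (-(2*a)) := by
    rw [← Real.exp_add]; congr 1; ring
  have h2 : 1 - Real.exp (-(2*a)) ≤ 2 * a := by
    have := Real.add_one_le_exp (-(2*a))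
    linarith
  have h3 : Real.exp a - Real.exp (-a) = Real.exp a * (1 - Real.exp (-(2*a))) := by
    rw [h1]; ring
  rw [h3]
  calc Real.exp a * (1 - Real.exp (-(2*a))) ≤ Real.exp a * (2 * a) :=
        mul_le_mul_of_nonneg_left h2 (Real.exp_pos _).le
    _ = 2 * a * Real.exp a := by ring

/-- For any β ∈ ℂ and μ > 0, sup_n ∑_m e^{μ|√m−√n|}|⟨m|D(β)|n⟩|² < ∞. -/
theorem stmt6 (β : ℂ) (μ : ℝ) (hμ : 0 < μ) :
    ∃ C : ℝ, ∀ n : ℕ,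
      ∑' m : ℕ, Real.exp (μ * |Real.sqrt m - Real.sqrt n|) * ‖Dmat β m n‖ ^ 2
        ≤ C := by
  set x : ℝ := (‖β‖) ^ 2 with hx
  refine ⟨2 * Real.exp (Real.exp (2*μ) * x + 4*μ^2*Real.exp (2*μ) * x), fun n => ?_⟩
  set s1 : ℝ := Real.sqrt ((n : ℝ) + 1) with hs1def
  have hs1 : 1 ≤ s1 := by
    rw [hs1def]
    have h0 : (0:ℝ) ≤ (n:ℝ) := Nat.cast_nonneg n
    have h := Real.sqrt_le_sqrt (show (1:ℝ) ≤ (n:ℝ)+1 by linarith)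
    rwa [Real.sqrt_one] at h
  have hs0 : (0:ℝ) < s1 := lt_of_lt_of_le one_pos hs1
  set τ : ℝ := 2*μ/s1 with hτdef
  have hτ0 : (0:ℝ) < τ := by positivity
  have hτle : τ ≤ 2*μ := div_le_self (by positivity) hs1
  have hsq1 : s1 ^ 2 = (n : ℝ) + 1 := Real.sq_sqrt (by positivity)
  have hτ2 : τ ^ 2 = 4*μ^2/((n:ℝ)+1) := by
    rw [hτdef, div_pow, hsq1]
    congr 1
    ring
  have hnτ : (n:ℝ) * τ^2 ≤ 4*μ^2 := by
    rw [hτ2]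
    have hp : (0:ℝ) < (n:ℝ)+1 := by positivity
    rw [show (n:ℝ) * (4*μ^2/((n:ℝ)+1)) = (4*μ^2) * ((n:ℝ)/((n:ℝ)+1)) by ring]
    calc (4*μ^2) * ((n:ℝ)/((n:ℝ)+1)) ≤ (4*μ^2) * 1 :=
          mul_le_mul_of_nonneg_left ((div_le_one hp).2 (by linarith)) (by positivity)
      _ = 4*μ^2 := by ring
  set D : ℝ := Real.exp (τ/2) - Real.exp (-(τ/2)) with hDdef
  have hD0 : 0 ≤ D := by
    have := Real.exp_le_exp.2 (show -(τ/2) ≤ τ/2 by linarith)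
    rw [hDdef]; linarith
  have hDub : D ≤ τ * Real.exp (τ/2) := by
    have h := sinh_bound (τ/2) (by positivity)
    have h2 : 2*(τ/2)*Real.exp (τ/2) = τ * Real.exp (τ/2) := by ring
    rw [hDdef]; linarith
  have hexphalf : (Real.exp (τ/2))^2 = Real.exp τ := by
    rw [← Real.exp_nat_mul]
    congr 1
    push_cast; ring
  have hD2 : D^2 ≤ τ^2 * Real.exp (2*μ) := by
    have h1 : D^2 ≤ (τ * Real.exp (τ/2))^2 := pow_le_pow_left₀ hD0 hDub 2
    have h2 : (τ * Real.exp (τ/2))^2 = τ^2 * Real.exp τ := by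
      rw [mul_pow, hexphalf]
    have h3 : Real.exp τ ≤ Real.exp (2*μ) := Real.exp_le_exp.2 hτle
    calc D^2 ≤ τ^2 * Real.exp τ := by rw [← h2]; exact h1
      _ ≤ τ^2 * Real.exp (2*μ) := mul_le_mul_of_nonneg_left h3 (by positivity)
  have hxnn : 0 ≤ x := by positivity
  have hmain2 : (n:ℝ) * (D^2 * x) ≤ 4*μ^2*Real.exp (2*μ) * x := by
    calc (n:ℝ) * (D^2 * x) ≤ (n:ℝ) * ((τ^2*Real.exp (2*μ)) * x) :=
          mul_le_mul_of_nonneg_left (mul_le_mul_of_nonneg_right hD2 hxnn) (by positivity)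
      _ = ((n:ℝ)*τ^2) * (Real.exp (2*μ)*x) := by ring
      _ ≤ 4*μ^2*(Real.exp (2*μ)*x) := mul_le_mul_of_nonneg_right hnτ (by positivity)
      _ = 4*μ^2*Real.exp (2*μ) * x := by ring
  have hEpos : Real.exp τ * x + (n:ℝ) * (D^2 * x)
      ≤ Real.exp (2*μ) * x + 4*μ^2*Real.exp (2*μ) * x := by
    have h1 : Real.exp τ * x ≤ Real.exp (2*μ) * x :=
      mul_le_mul_of_nonneg_right (Real.exp_le_exp.2 hτle) hxnn
    linarith
  have hEneg : Real.exp (-τ) * x + (n:ℝ) * ((Real.exp (-τ/2) - Real.exp (-(-τ/2)))^2 * x)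
      ≤ Real.exp (2*μ) * x + 4*μ^2*Real.exp (2*μ) * x := by
    have hsym : (Real.exp (-τ/2) - Real.exp (-(-τ/2)))^2 = D^2 := by
      rw [show -τ/2 = -(τ/2) by ring, neg_neg, hDdef]
      ring
    rw [hsym]
    have h1 : Real.exp (-τ) * x ≤ Real.exp (2*μ) * x :=
      mul_le_mul_of_nonneg_right (Real.exp_le_exp.2 (by linarith)) hxnn
    linarith
  -- termwise comparison
  have hAnn : ∀ m : ℕ, 0 ≤ (‖Dmat β m n‖) ^ 2 := fun m => by positivity
  have hfg : ∀ m : ℕ,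
      Real.exp (μ * |Real.sqrt m - Real.sqrt n|) * (‖Dmat β m n‖) ^ 2
      ≤ Real.exp (τ * ((m:ℝ) - n)) * (‖Dmat β m n‖) ^ 2
        + Real.exp (-τ * ((m:ℝ) - n)) * (‖Dmat β m n‖) ^ 2 := by
    intro m
    have hts : τ * s1 = 2*μ := div_mul_cancel₀ _ (ne_of_gt hs0)
    have hw1 : μ * |Real.sqrt m - Real.sqrt n| ≤ τ * |(m:ℝ) - (n:ℝ)| := by
      have h6 : μ * |Real.sqrt m - Real.sqrt n| * s1 ≤ (τ * |(m:ℝ) - (n:ℝ)|) * s1 := by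
        calc μ * |Real.sqrt m - Real.sqrt n| * s1
            = μ * (|Real.sqrt m - Real.sqrt n| * s1) := by ring
          _ ≤ μ * (2 * |(m:ℝ) - (n:ℝ)|) := mul_le_mul_of_nonneg_left (weight n m) hμ.le
          _ = (τ * s1) * |(m:ℝ) - (n:ℝ)| := by rw [hts]; ring
          _ = (τ * |(m:ℝ) - (n:ℝ)|) * s1 := by ring
      exact le_of_mul_le_mul_right h6 hs0
    have hw2 : Real.exp (τ * |(m:ℝ) - (n:ℝ)|)
        ≤ Real.exp (τ * ((m:ℝ) - n)) + Real.exp (-τ * ((m:ℝ) - n)) := by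
      have hneg : Real.exp (-τ * ((m:ℝ) - n)) = Real.exp (-(τ * ((m:ℝ) - n))) := by
        rw [neg_mul]
      rcases abs_cases ((m:ℝ) - (n:ℝ)) with ⟨he, _⟩ | ⟨he, _⟩
      · rw [he]
        have := Real.exp_pos (-τ * ((m:ℝ) - n))
        linarith
      · rw [he]
        have h7 : τ * -((m:ℝ) - n) = -(τ * ((m:ℝ) - n)) := by ring
        rw [h7, ← hneg]
        have := Real.exp_pos (τ * ((m:ℝ) - n))
        linarith
    calc Real.exp (μ * |Real.sqrt m - Real.sqrt n|) * (‖Dmat β m n‖) ^ 2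
        ≤ (Real.exp (τ * ((m:ℝ) - n)) + Real.exp (-τ * ((m:ℝ) - n))) * (‖Dmat β m n‖) ^ 2 :=
          mul_le_mul_of_nonneg_right ((Real.exp_le_exp.2 hw1).trans hw2) (hAnn m)
      _ = Real.exp (τ * ((m:ℝ) - n)) * (‖Dmat β m n‖) ^ 2
          + Real.exp (-τ * ((m:ℝ) - n)) * (‖Dmat β m n‖) ^ 2 := by ring
  have hsum1 := (main_bound β τ n).1
  have hsum2 := (main_bound β (-τ) n).1
  have hb1 := (main_bound β τ n).2
  have hb2 := (main_bound β (-τ) n).2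
  have hg : Summable (fun m : ℕ =>
      Real.exp (τ * ((m:ℝ) - n)) * (‖Dmat β m n‖) ^ 2
        + Real.exp (-τ * ((m:ℝ) - n)) * (‖Dmat β m n‖) ^ 2) := hsum1.add hsum2
  have hf : Summable (fun m : ℕ =>
      Real.exp (μ * |Real.sqrt m - Real.sqrt n|) * (‖Dmat β m n‖) ^ 2) :=
    Summable.of_nonneg_of_le (fun m => by positivity) hfg hg
  calc ∑' m : ℕ, Real.exp (μ * |Real.sqrt m - Real.sqrt n|) * (‖Dmat β m n‖) ^ 2
      ≤ ∑' m : ℕ, (Real.exp (τ * ((m:ℝ) - n)) * (‖Dmat β m n‖) ^ 2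
          + Real.exp (-τ * ((m:ℝ) - n)) * (‖Dmat β m n‖) ^ 2) :=
        Summable.tsum_le_tsum hfg hf hg
    _ = (∑' m : ℕ, Real.exp (τ * ((m:ℝ) - n)) * (‖Dmat β m n‖) ^ 2)
        + ∑' m : ℕ, Real.exp (-τ * ((m:ℝ) - n)) * (‖Dmat β m n‖) ^ 2 :=
        Summable.tsum_add hsum1 hsum2
    _ ≤ Real.exp (Real.exp (2*μ) * x + 4*μ^2*Real.exp (2*μ) * x)
        + Real.exp (Real.exp (2*μ) * x + 4*μ^2*Real.exp (2*μ) * x) := by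
        apply add_le_add
        · exact hb1.trans (Real.exp_le_exp.2 hEpos)
        · exact hb2.trans (Real.exp_le_exp.2 hEneg)
    _ = 2 * Real.exp (Real.exp (2*μ) * x + 4*μ^2*Real.exp (2*μ) * x) := by ring
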